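/- For p < 0 and z ∈ ℝ, the parabolic cylinder function defined by D_p(z) = (e^{-z²/4}/Γ(-p)) ∫₀^∞ e^{-xz - x²/2} x^{-p-1} dx satisfies the differential equation D_p''(z) + (p + 1/2 - z²/4) D_p(z) = 0. -/

import Mathlib

/-- The parabolic cylinder function `D_p(z)` for `p < 0`, via its integral
representation `D_p(z) = (e^{-z²/4}/Γ(-p)) ∫₀^∞ e^{-xz - x²/2} x^{-p-1} dx`. -/
noncomputable def pcf (p z : ℝ) : ℝ :=
  Real.exp (-z ^ 2 / 4) / Real.Gamma (-p) *
    ∫ x in Set.Ioi (0:ℝ), Real.exp (-x * z - x ^ 2 / 2) * x ^ (-p - 1)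

open MeasureTheory Set Filter Metric Topology

namespace PCFAux

/-- The kernel integral `∫₀^∞ e^{-xz - x²/2} x^q dx`. -/
noncomputable def K (q z : ℝ) : ℝ :=
  ∫ x in Set.Ioi (0:ℝ), Real.exp (-x * z - x ^ 2 / 2) * x ^ q

lemma contK (q z : ℝ) :
    ContinuousOn (fun x : ℝ => Real.exp (-x * z - x ^ 2 / 2) * x ^ q) (Set.Ioi 0) := by
  apply ContinuousOn.mul
  · exact (Real.continuous_exp.comp (by continuity)).continuousOn
  · exact continuousOn_id.rpow_const fun x hx => Or.inl (ne_of_gt hx)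

lemma integrableK (q z : ℝ) (hq : -1 < q) :
    IntegrableOn (fun x : ℝ => Real.exp (-x * z - x ^ 2 / 2) * x ^ q) (Set.Ioi 0) := by
  have hG : IntegrableOn (fun x : ℝ => Real.exp (-x) * x ^ q) (Set.Ioi 0) := by
    have := Real.GammaIntegral_convergent (s := q + 1) (by linarith)
    simpa using this
  refine Integrable.mono' (hG.const_mul (Real.exp ((|z| + 1) ^ 2 / 2)))
    ((contK q z).aestronglyMeasurable measurableSet_Ioi) ?_
  filter_upwards [ae_restrict_mem measurableSet_Ioi] with x hx
  have hx0 : (0:ℝ) < x := hx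
  have hxa : 0 ≤ x ^ q := Real.rpow_nonneg hx0.le q
  have h1 : -x * z ≤ x * |z| := by
    have := mul_le_mul_of_nonneg_left (neg_le_abs z) hx0.le
    simpa [mul_comm] using this
  have h2 : -x * z - x ^ 2 / 2 ≤ (|z| + 1) ^ 2 / 2 + -x := by
    nlinarith [sq_nonneg (x - (|z| + 1))]
  have hnorm : ‖Real.exp (-x * z - x ^ 2 / 2) * x ^ q‖
      = Real.exp (-x * z - x ^ 2 / 2) * x ^ q := by
    rw [Real.norm_eq_abs, abs_mul, abs_of_pos (Real.exp_pos _), abs_of_nonneg hxa]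
  rw [hnorm]
  calc Real.exp (-x * z - x ^ 2 / 2) * x ^ q
      ≤ (Real.exp ((|z| + 1) ^ 2 / 2) * Real.exp (-x)) * x ^ q := by
        refine mul_le_mul_of_nonneg_right ?_ hxa
        rw [← Real.exp_add]
        exact Real.exp_le_exp.2 h2
    _ = Real.exp ((|z| + 1) ^ 2 / 2) * (Real.exp (-x) * x ^ q) := by ring

lemma hasDerivK (q : ℝ) (hq : -1 < q) (z : ℝ) :
    HasDerivAt (K q) (-(K (q + 1) z)) z := by
  have key := hasDerivAt_integral_of_dominated_loc_of_deriv_le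
    (μ := volume.restrict (Set.Ioi (0:ℝ)))
    (F := fun z x => Real.exp (-x * z - x ^ 2 / 2) * x ^ q)
    (F' := fun z x => -(Real.exp (-x * z - x ^ 2 / 2) * x ^ (q + 1)))
    (x₀ := z)
    (bound := fun x => Real.exp (-x * (-(|z| + 1)) - x ^ 2 / 2) * x ^ (q + 1))
    (ball_mem_nhds z one_pos)
    (Eventually.of_forall fun w =>
      (contK q w).aestronglyMeasurable measurableSet_Ioi)
    (integrableK q z hq)
    (((contK (q + 1) z).aestronglyMeasurable measurableSet_Ioi).neg)
    ?_ (integrableK (q + 1) (-(|z| + 1)) (by linarith)) ?_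
  · have h2 := key.2
    rw [MeasureTheory.integral_neg] at h2
    exact h2
  · filter_upwards [ae_restrict_mem measurableSet_Ioi] with x hx w hw
    have hx0 : (0:ℝ) < x := hx
    have hxa : 0 ≤ x ^ (q + 1) := Real.rpow_nonneg hx0.le _
    have hwz : |w| ≤ |z| + 1 := by
      have := abs_sub_abs_le_abs_sub w z
      have hd : |w - z| < 1 := by simpa [Real.dist_eq] using mem_ball.mp hw
      linarith
    have h1 : -x * w ≤ -x * (-(|z| + 1)) := by
      have h1' : -w ≤ |z| + 1 := (neg_le_abs w).trans hwz
      have := mul_le_mul_of_nonneg_left h1' hx0.le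
      nlinarith
    have hnorm : ‖-(Real.exp (-x * w - x ^ 2 / 2) * x ^ (q + 1))‖
        = Real.exp (-x * w - x ^ 2 / 2) * x ^ (q + 1) := by
      rw [norm_neg, Real.norm_eq_abs, abs_mul, abs_of_pos (Real.exp_pos _),
        abs_of_nonneg hxa]
    rw [hnorm]
    exact mul_le_mul_of_nonneg_right (Real.exp_le_exp.2 (by linarith)) hxa
  · filter_upwards [ae_restrict_mem measurableSet_Ioi] with x hx w hw
    have hx0 : (0:ℝ) < x := hx
    have hg : HasDerivAt (fun w : ℝ => -x * w - x ^ 2 / 2) (-x) w := by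
      simpa using ((hasDerivAt_id w).const_mul (-x)).sub_const (x ^ 2 / 2)
    have := hg.exp.mul_const (x ^ q)
    convert this using 1
    · rfl
    rw [Real.rpow_add_one hx0.ne' q]
    ring

lemma tendstoK (b z : ℝ) :
    Tendsto (fun x : ℝ => Real.exp (-x * z - x ^ 2 / 2) * x ^ b) atTop (𝓝 0) := by
  have h0 : Tendsto
      (fun x : ℝ => Real.exp ((|z| + 1) ^ 2 / 2) * (x ^ b * Real.exp (-1 * x)))
      atTop (𝓝 0) := by
    have := (tendsto_rpow_mul_exp_neg_mul_atTop_nhds_zero b 1 one_pos).const_mul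
      (Real.exp ((|z| + 1) ^ 2 / 2))
    simpa using this
  apply squeeze_zero' ?_ ?_ h0
  · filter_upwards [eventually_gt_atTop (0:ℝ)] with x hx
    positivity
  · filter_upwards [eventually_gt_atTop (0:ℝ)] with x hx
    have h1 : -x * z ≤ x * |z| := by
      have := mul_le_mul_of_nonneg_left (neg_le_abs z) hx.le
      simpa [mul_comm] using this
    have h2 : -x * z - x ^ 2 / 2 ≤ (|z| + 1) ^ 2 / 2 + -1 * x := by
      nlinarith [sq_nonneg (x - (|z| + 1))]
    have hxa : 0 ≤ x ^ b := Real.rpow_nonneg hx.le b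
    calc Real.exp (-x * z - x ^ 2 / 2) * x ^ b
        ≤ (Real.exp ((|z| + 1) ^ 2 / 2) * Real.exp (-1 * x)) * x ^ b := by
          refine mul_le_mul_of_nonneg_right ?_ hxa
          rw [← Real.exp_add]
          exact Real.exp_le_exp.2 h2
      _ = Real.exp ((|z| + 1) ^ 2 / 2) * (x ^ b * Real.exp (-1 * x)) := by ring

lemma ibpK (p z : ℝ) (hp : p < 0) :
    K (-p + 1) z + z * K (-p) z + p * K (-p - 1) z = 0 := by
  set f : ℝ → ℝ := fun x => Real.exp (-x * z - x ^ 2 / 2) * x ^ (-p) with hf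
  set f' : ℝ → ℝ := fun x =>
    -(Real.exp (-x * z - x ^ 2 / 2) * x ^ (-p + 1))
      - z * (Real.exp (-x * z - x ^ 2 / 2) * x ^ (-p))
      - p * (Real.exp (-x * z - x ^ 2 / 2) * x ^ (-p - 1)) with hf'
  have hderiv : ∀ x ∈ Set.Ioi (0:ℝ), HasDerivAt f (f' x) x := by
    intro x hx
    have hx0 : (0:ℝ) < x := hx
    have hg : HasDerivAt (fun x : ℝ => -x * z - x ^ 2 / 2) (-z - x) x := by
      have h := (((hasDerivAt_id x).neg).mul_const z).sub
        ((hasDerivAt_pow 2 x).div_const 2)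
      convert h using 1
      · rfl
      · rfl
      · rfl
      simp
      try ring
    have hrp : HasDerivAt (fun x : ℝ => x ^ (-p)) (-p * x ^ (-p - 1)) x :=
      Real.hasDerivAt_rpow_const (Or.inl hx0.ne')
    have := hg.exp.mul hrp
    convert this using 1
    · rfl
    · rfl
    · rfl
    simp only [hf']
    rw [show -p + 1 = (-p) + 1 by ring, Real.rpow_add_one hx0.ne' (-p)]
    ring
  have hf'int : IntegrableOn f' (Set.Ioi 0) := by
    apply Integrable.sub
    apply Integrable.sub
    · exact (integrableK (-p + 1) z (by linarith)).neg
    · exact (integrableK (-p) z (by linarith)).const_mul z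
    · exact (integrableK (-p - 1) z (by linarith)).const_mul p
  have hcont : ContinuousWithinAt f (Set.Ici 0) 0 := by
    apply ContinuousWithinAt.mul
    · exact (Real.continuous_exp.comp (by continuity)).continuousWithinAt
    · exact (Real.continuousAt_rpow_const 0 (-p) (Or.inr (by linarith))).continuousWithinAt
  have htop : Tendsto f atTop (𝓝 0) := tendstoK (-p) z
  have hmain := MeasureTheory.integral_Ioi_of_hasDerivAt_of_tendsto hcont hderiv hf'int htop
  have hf0 : f 0 = 0 := by
    simp [hf, Real.zero_rpow (by linarith : -p ≠ 0)]
  have hsplit : ∫ x in Set.Ioi (0:ℝ), f' x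
      = -(K (-p + 1) z) - z * K (-p) z - p * K (-p - 1) z := by
    simp only [hf']
    rw [MeasureTheory.integral_sub, MeasureTheory.integral_sub,
      MeasureTheory.integral_neg, MeasureTheory.integral_const_mul,
      MeasureTheory.integral_const_mul]
    · rfl
    · exact (integrableK (-p + 1) z (by linarith)).neg
    · exact (integrableK (-p) z (by linarith)).const_mul z
    · apply Integrable.sub
      · exact (integrableK (-p + 1) z (by linarith)).neg
      · exact (integrableK (-p) z (by linarith)).const_mul z
    · exact (integrableK (-p - 1) z (by linarith)).const_mul p
  rw [hsplit, hf0] at hmain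
  linarith

end PCFAux

open PCFAux in
/-- For `p < 0`, `D_p` satisfies the parabolic cylinder ODE
`D_p''(z) + (p + 1/2 - z²/4) D_p(z) = 0`. -/
theorem stmt4 (p : ℝ) (hp : p < 0) :
    ∀ z : ℝ, iteratedDeriv 2 (pcf p) z + (p + 1/2 - z ^ 2 / 4) * pcf p z = 0 := by
  intro z
  have hGamma : Real.Gamma (-p) ≠ 0 := (Real.Gamma_pos_of_pos (by linarith)).ne'
  set g : ℝ → ℝ := fun w => Real.exp (-w ^ 2 / 4) / Real.Gamma (-p) with hgdef
  have hg : ∀ w : ℝ, HasDerivAt g (-(w / 2) * g w) w := by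
    intro w
    have h1 : HasDerivAt (fun w : ℝ => -w ^ 2 / 4) (-(w / 2)) w := by
      have := ((hasDerivAt_pow 2 w).neg).div_const 4
      convert this using 1
      · rfl
      · rfl
      · rfl
      simp
      try ring
    have := h1.exp.div_const (Real.Gamma (-p))
    convert this using 1
    · rfl
    · rfl
    simp [hgdef]
    ring
  have hK0 : HasDerivAt (K (-p - 1)) (-(K (-p) z)) z := by
    have := hasDerivK (-p - 1) (by linarith) z
    rwa [show -p - 1 + 1 = -p by ring] at this
  have hK0' : ∀ w : ℝ, HasDerivAt (K (-p - 1)) (-(K (-p) w)) w := by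
    intro w
    have := hasDerivK (-p - 1) (by linarith) w
    rwa [show -p - 1 + 1 = -p by ring] at this
  have hK1 : HasDerivAt (K (-p)) (-(K (-p + 1) z)) z := hasDerivK (-p) (by linarith) z
  have hpcf : pcf p = fun w => g w * K (-p - 1) w := rfl
  set d1 : ℝ → ℝ := fun w => -(w / 2) * g w * K (-p - 1) w + g w * -(K (-p) w) with hd1def
  have hD1 : ∀ w : ℝ, HasDerivAt (pcf p) (d1 w) w := by
    intro w
    rw [hpcf]
    exact (hg w).mul (hK0' w)
  have hderiv1 : deriv (pcf p) = d1 := funext fun w => (hD1 w).deriv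
  -- second derivative
  have hA : HasDerivAt (fun w : ℝ => -(w / 2) * g w * K (-p - 1) w)
      ((-(1 / 2) * g z + -(z / 2) * (-(z / 2) * g z)) * K (-p - 1) z
        + -(z / 2) * g z * -(K (-p) z)) z := by
    have h1 : HasDerivAt (fun w : ℝ => -(w / 2)) (-(1 / 2)) z :=
      ((hasDerivAt_id z).div_const 2).neg
    exact ((h1.mul (hg z)).mul hK0)
  have hB : HasDerivAt (fun w : ℝ => g w * -(K (-p) w))
      (-(z / 2) * g z * -(K (-p) z) + g z * -(-(K (-p + 1) z))) z :=
    (hg z).mul hK1.neg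
  have hD2 : HasDerivAt d1
      ((-(1 / 2) * g z + -(z / 2) * (-(z / 2) * g z)) * K (-p - 1) z
        + -(z / 2) * g z * -(K (-p) z)
        + (-(z / 2) * g z * -(K (-p) z) + g z * -(-(K (-p + 1) z)))) z := hA.add hB
  have h2 : iteratedDeriv 2 (pcf p) z
      = (-(1 / 2) * g z + -(z / 2) * (-(z / 2) * g z)) * K (-p - 1) z
        + -(z / 2) * g z * -(K (-p) z)
        + (-(z / 2) * g z * -(K (-p) z) + g z * -(-(K (-p + 1) z))) := by
    rw [show (2:ℕ) = 1 + 1 by norm_num, iteratedDeriv_succ, iteratedDeriv_one,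
      hderiv1]
    exact hD2.deriv
  have hibp := ibpK p z hp
  have hpcfz : pcf p z = g z * K (-p - 1) z := rfl
  rw [h2, hpcfz]
  linear_combination g z * hibp
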